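/- arXiv:1310.2828 — 4 statements merged into one kernel-verified Lean document; each statement's English description precedes it below -/
import Mathlib

section
/- Let A be a real symmetric positive definite n×n matrix and R an invertible n×n matrix such that the iteration I − RA is a contraction in the A-norm: ‖(I − RA)v‖_A² ≤ (1 − δ)‖v‖_A² for some δ ∈ (0,1] and all v. Define the symmetrization R̃ = Rᵀ(R⁻¹ + R⁻ᵀ − A)R. Then R̃ is symmetric positive definite and (Av, v) ≤ (R̃⁻¹v, v) for all v ∈ ℝⁿ. -/
open Matrix

/-- Cauchy–Schwarz for a real positive semidefinite matrix. -/
lemma psd_cauchy_schwarz {n : ℕ} (B : Matrix (Fin n) (Fin n) ℝ)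
    (hB : B.PosSemidef) (x y : Fin n → ℝ) :
    (x ⬝ᵥ B *ᵥ y) ^ 2 ≤ (x ⬝ᵥ B *ᵥ x) * (y ⬝ᵥ B *ᵥ y) := by
  have hsymm : ∀ u v : Fin n → ℝ, u ⬝ᵥ B *ᵥ v = v ⬝ᵥ B *ᵥ u := by
    intro u v
    have hBt : Bᵀ = B := by
      have := hB.1.eq
      rwa [conjTranspose_eq_transpose_of_trivial] at this
    rw [dotProduct_mulVec, ← mulVec_transpose, hBt, dotProduct_comm]
  have key : ∀ t : ℝ, 0 ≤ (y ⬝ᵥ B *ᵥ y) * (t * t) + (2 * (x ⬝ᵥ B *ᵥ y)) * t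
      + (x ⬝ᵥ B *ᵥ x) := by
    intro t
    have h0 : (0:ℝ) ≤ (x + t • y) ⬝ᵥ B *ᵥ (x + t • y) := by
      have := hB.dotProduct_mulVec_nonneg (x + t • y)
      simpa using this
    have hexp : (x + t • y) ⬝ᵥ B *ᵥ (x + t • y)
        = (y ⬝ᵥ B *ᵥ y) * (t * t) + (2 * (x ⬝ᵥ B *ᵥ y)) * t + (x ⬝ᵥ B *ᵥ x) := by
      simp only [mulVec_add, mulVec_smul, dotProduct_add, add_dotProduct,
        dotProduct_smul, smul_dotProduct, smul_eq_mul, hsymm y x]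
      ring
    linarith [hexp ▸ h0]
  have := discrim_le_zero key
  rw [discrim] at this
  nlinarith [this]

/-- quadratic form conjugation identity -/
lemma quad_conj {n : ℕ} (B M : Matrix (Fin n) (Fin n) ℝ) (v : Fin n → ℝ) :
    (M *ᵥ v) ⬝ᵥ B *ᵥ (M *ᵥ v) = v ⬝ᵥ (Mᵀ * B * M) *ᵥ v := by
  have h1 : (Mᵀ * B * M) *ᵥ v = Mᵀ *ᵥ (B *ᵥ (M *ᵥ v)) := by
    rw [← Matrix.mulVec_mulVec, ← Matrix.mulVec_mulVec]
  rw [h1, dotProduct_mulVec v, vecMul_transpose]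

theorem stmt_11 (n : ℕ) (A R : Matrix (Fin n) (Fin n) ℝ)
    (hA : A.PosDef) (hR : IsUnit R) (δ : ℝ) (hδ0 : 0 < δ) (hδ1 : δ ≤ 1)
    (hcontr : ∀ v : Fin n → ℝ,
      ((1 - R * A).mulVec v) ⬝ᵥ A.mulVec ((1 - R * A).mulVec v) ≤
        (1 - δ) * (v ⬝ᵥ A.mulVec v)) :
    let Rt : Matrix (Fin n) (Fin n) ℝ := Rᵀ * (R⁻¹ + R⁻¹ᵀ - A) * R
    Rt.PosDef ∧ ∀ v : Fin n → ℝ, v ⬝ᵥ A.mulVec v ≤ v ⬝ᵥ Rt⁻¹.mulVec v := by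
  intro Rt
  have hRdet : IsUnit R.det := (isUnit_iff_isUnit_det R).mp hR
  have hRinv : R⁻¹ * R = 1 := nonsing_inv_mul R hRdet
  have hAt : Aᵀ = A := by
    have := hA.1.eq; rwa [conjTranspose_eq_transpose_of_trivial] at this
  have hAdet : IsUnit A.det := hA.det_pos.ne'.isUnit
  have hAinv : A * A⁻¹ = 1 := mul_nonsing_inv A hAdet
  -- key identity
  have hid : (1 - R * A)ᵀ * A * (1 - R * A) = A - A * Rt * A := by
    show (1 - R * A)ᵀ * A * (1 - R * A) = A - A * (Rᵀ * (R⁻¹ + R⁻¹ᵀ - A) * R) * A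
    have h1 : Rᵀ * R⁻¹ᵀ = 1 := by rw [← transpose_mul, hRinv, transpose_one]
    have expand : A * (Rᵀ * (R⁻¹ + R⁻¹ᵀ - A) * R) * A
        = A * Rᵀ * A + A * (R * A) - A * Rᵀ * A * (R * A) := by
      have : Rᵀ * (R⁻¹ + R⁻¹ᵀ - A) * R = Rᵀ + R - Rᵀ * A * R := by
        rw [Matrix.mul_sub, Matrix.mul_add, Matrix.sub_mul, Matrix.add_mul,
          Matrix.mul_assoc Rᵀ R⁻¹ R, hRinv, Matrix.mul_one, h1]
        rw [Matrix.one_mul]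
      rw [this]
      noncomm_ring
    rw [transpose_sub, transpose_one, transpose_mul, hAt, expand]
    noncomm_ring
  have hq : ∀ v : Fin n → ℝ,
      (A *ᵥ v) ⬝ᵥ Rt *ᵥ (A *ᵥ v) = v ⬝ᵥ (A * Rt * A) *ᵥ v := by
    intro v
    have := quad_conj Rt A v
    rwa [hAt] at this
  -- lower bound: δ (v,Av) ≤ (Av, Rt Av)
  have hlow : ∀ v : Fin n → ℝ, δ * (v ⬝ᵥ A *ᵥ v) ≤ (A *ᵥ v) ⬝ᵥ Rt *ᵥ (A *ᵥ v) := by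
    intro v
    have h := hcontr v
    rw [show (1 - R * A).mulVec v ⬝ᵥ A.mulVec ((1 - R * A).mulVec v)
        = v ⬝ᵥ ((1 - R * A)ᵀ * A * (1 - R * A)) *ᵥ v from quad_conj A _ v, hid] at h
    rw [hq v]
    have hsub : v ⬝ᵥ (A - A * Rt * A) *ᵥ v
        = v ⬝ᵥ A *ᵥ v - v ⬝ᵥ (A * Rt * A) *ᵥ v := by
      rw [sub_mulVec, dotProduct_sub]
    rw [hsub] at h
    nlinarith
  -- upper bound: (Av, Rt Av) ≤ (v, Av)
  have hupp : ∀ v : Fin n → ℝ, (A *ᵥ v) ⬝ᵥ Rt *ᵥ (A *ᵥ v) ≤ v ⬝ᵥ A *ᵥ v := by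
    intro v
    have h0 : (0:ℝ) ≤ ((1 - R * A) *ᵥ v) ⬝ᵥ A *ᵥ ((1 - R * A) *ᵥ v) := by
      have := hA.posSemidef.dotProduct_mulVec_nonneg ((1 - R * A) *ᵥ v)
      simpa using this
    rw [quad_conj A _ v, hid] at h0
    rw [hq v]
    have hsub : v ⬝ᵥ (A - A * Rt * A) *ᵥ v
        = v ⬝ᵥ A *ᵥ v - v ⬝ᵥ (A * Rt * A) *ᵥ v := by
      rw [sub_mulVec, dotProduct_sub]
    linarith [hsub ▸ h0]
  -- Rt is symmetric
  have hRtsymm : Rtᵀ = Rt := by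
    show (Rᵀ * (R⁻¹ + R⁻¹ᵀ - A) * R)ᵀ = Rᵀ * (R⁻¹ + R⁻¹ᵀ - A) * R
    rw [transpose_mul, transpose_mul, transpose_transpose, transpose_sub, transpose_add,
      transpose_transpose, hAt]
    noncomm_ring
  have hRtHerm : Rt.IsHermitian := by
    rw [Matrix.IsHermitian, conjTranspose_eq_transpose_of_trivial, hRtsymm]
  -- Rt PosDef
  have hRtpos : Rt.PosDef := by
    refine PosDef.of_dotProduct_mulVec_pos hRtHerm fun x hx => ?_
    have hAx : A *ᵥ (A⁻¹ *ᵥ x) = x := by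
      rw [mulVec_mulVec, hAinv, one_mulVec]
    have hvne : A⁻¹ *ᵥ x ≠ 0 := by
      intro h
      apply hx
      rw [← hAx, h, mulVec_zero]
    have h1 := hlow (A⁻¹ *ᵥ x)
    have h2 : 0 < (A⁻¹ *ᵥ x) ⬝ᵥ A *ᵥ (A⁻¹ *ᵥ x) := by
      have := hA.dotProduct_mulVec_pos hvne
      simpa using this
    rw [hAx] at h1 h2
    have : (0:ℝ) < x ⬝ᵥ Rt *ᵥ x := by nlinarith
    simpa using this
  refine ⟨hRtpos, fun v => ?_⟩
  -- Cauchy–Schwarz argument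
  have hRtdet : IsUnit Rt.det := hRtpos.det_pos.ne'.isUnit
  have hRtinv : Rt * Rt⁻¹ = 1 := mul_nonsing_inv Rt hRtdet
  have hcs := psd_cauchy_schwarz Rt hRtpos.posSemidef (A *ᵥ v) (Rt⁻¹ *ᵥ v)
  rw [mulVec_mulVec, hRtinv, one_mulVec] at hcs
  have hAvv : (A *ᵥ v) ⬝ᵥ v = v ⬝ᵥ A *ᵥ v := dotProduct_comm _ _
  rw [hAvv, dotProduct_comm (Rt⁻¹ *ᵥ v) v] at hcs
  have hRtbd := hupp v
  have hRtAvRt : (0:ℝ) ≤ (A *ᵥ v) ⬝ᵥ Rt *ᵥ (A *ᵥ v) := by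
    have := hRtpos.posSemidef.dotProduct_mulVec_nonneg (A *ᵥ v)
    simpa using this
  have hRtinv_nonneg : (0:ℝ) ≤ v ⬝ᵥ Rt⁻¹ *ᵥ v := by
    have := hRtpos.inv.posSemidef.dotProduct_mulVec_nonneg v
    simpa using this
  have hAv_nonneg : (0:ℝ) ≤ v ⬝ᵥ A *ᵥ v := by
    have := hA.posSemidef.dotProduct_mulVec_nonneg v; simpa using this
  rcases eq_or_lt_of_le hAv_nonneg with h0 | hpos
  · rw [← h0]; exact hRtinv_nonneg
  · have h3 : (v ⬝ᵥ A *ᵥ v) ^ 2 ≤ (v ⬝ᵥ A *ᵥ v) * (v ⬝ᵥ Rt⁻¹ *ᵥ v) :=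
      le_trans hcs (mul_le_mul_of_nonneg_right hRtbd hRtinv_nonneg)
    nlinarith
end

section
/- Let A be symmetric positive definite, D its diagonal (assumed positive definite). Then for any v, (D⁻¹Av, Av) ≤ ρ(D^{-1/2}AD^{-1/2})·(Av, v), where ρ denotes the spectral radius. -/
open Matrix

lemma repr_mulVec (n : ℕ) (M : Matrix (Fin n) (Fin n) ℝ) (hM : M.IsHermitian)
    (u : EuclideanSpace ℝ (Fin n)) (i : Fin n) :
    hM.eigenvectorBasis.repr ((WithLp.equiv 2 _).symm (M *ᵥ u)) i
      = hM.eigenvalues i * hM.eigenvectorBasis.repr u i := by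
  rw [OrthonormalBasis.repr_apply_apply, OrthonormalBasis.repr_apply_apply]
  simp only [EuclideanSpace.inner_eq_star_dotProduct, Equiv.apply_symm_apply, star_trivial]
  have hsym : Mᵀ = M := by
    have := hM; rwa [IsHermitian, conjTranspose_eq_transpose_of_trivial] at this
  show (M *ᵥ u.ofLp) ⬝ᵥ (hM.eigenvectorBasis i).ofLp = hM.eigenvalues i * (u.ofLp ⬝ᵥ (hM.eigenvectorBasis i).ofLp)
  rw [dotProduct_comm, dotProduct_mulVec, ← mulVec_transpose, hsym, hM.mulVec_eigenvectorBasis,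
    smul_dotProduct, smul_eq_mul, dotProduct_comm]

lemma key (n : ℕ) (hn : 0 < n) (M : Matrix (Fin n) (Fin n) ℝ) (hM : M.IsHermitian)
    (hpsd : M.PosSemidef) (u : Fin n → ℝ) :
    (M *ᵥ u) ⬝ᵥ (M *ᵥ u) ≤ (⨆ i, hM.eigenvalues i) * (u ⬝ᵥ (M *ᵥ u)) := by
  haveI : Nonempty (Fin n) := ⟨⟨0, hn⟩⟩
  set x : EuclideanSpace ℝ (Fin n) := (WithLp.equiv 2 _).symm u with hx
  set y : EuclideanSpace ℝ (Fin n) := (WithLp.equiv 2 _).symm (M *ᵥ u) with hy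
  set b := hM.eigenvectorBasis with hb
  have h1 : (M *ᵥ u) ⬝ᵥ (M *ᵥ u) = inner ℝ y y := by
    rw [EuclideanSpace.inner_eq_star_dotProduct, star_trivial]; rfl
  have h2 : u ⬝ᵥ (M *ᵥ u) = inner ℝ x y := by
    rw [EuclideanSpace.inner_eq_star_dotProduct, star_trivial, dotProduct_comm]; rfl
  have hrepr : ∀ i, b.repr y i = hM.eigenvalues i * b.repr x i := fun i =>
    repr_mulVec n M hM x i
  rw [h1, h2, ← b.repr.inner_map_map y y, ← b.repr.inner_map_map x y,
    EuclideanSpace.inner_eq_star_dotProduct, EuclideanSpace.inner_eq_star_dotProduct]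
  simp only [star_trivial, dotProduct]
  rw [Finset.mul_sum]
  apply Finset.sum_le_sum
  intro i _
  rw [hrepr i]
  have hev0 : 0 ≤ hM.eigenvalues i := hpsd.eigenvalues_nonneg i
  have hevle : hM.eigenvalues i ≤ ⨆ j, hM.eigenvalues j :=
    le_ciSup (Set.Finite.bddAbove (Set.finite_range _)) i
  have hsq : (0:ℝ) ≤ (b.repr x i) * (b.repr x i) := mul_self_nonneg _
  calc hM.eigenvalues i * b.repr x i * (hM.eigenvalues i * b.repr x i)
      = hM.eigenvalues i * (hM.eigenvalues i * (b.repr x i * b.repr x i)) := by ring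
    _ ≤ (⨆ j, hM.eigenvalues j) * (hM.eigenvalues i * (b.repr x i * b.repr x i)) := by
        apply mul_le_mul_of_nonneg_right hevle (mul_nonneg hev0 hsq)
    _ = (⨆ j, hM.eigenvalues j) * (hM.eigenvalues i * b.repr x i * b.repr x i) := by ring

theorem stmt_14 (n : ℕ) (hn : 0 < n) (A : Matrix (Fin n) (Fin n) ℝ)
    (hA : A.PosDef) (hdiag : ∀ i, 0 < A i i)
    (hM : ((Matrix.diagonal fun i => 1 / Real.sqrt (A i i)) * A *
      (Matrix.diagonal fun i => 1 / Real.sqrt (A i i))).IsHermitian) :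
    ∀ v : Fin n → ℝ,
      (A.mulVec v) ⬝ᵥ ((Matrix.diagonal fun i => (A i i)⁻¹).mulVec (A.mulVec v)) ≤
        (⨆ i, hM.eigenvalues i) * (v ⬝ᵥ A.mulVec v) := by
  intro v
  set M : Matrix (Fin n) (Fin n) ℝ := (Matrix.diagonal fun i => 1 / Real.sqrt (A i i)) * A *
      (Matrix.diagonal fun i => 1 / Real.sqrt (A i i)) with hMdef
  have hs : ∀ i, 0 < Real.sqrt (A i i) := fun i => Real.sqrt_pos.2 (hdiag i)
  set u : Fin n → ℝ := fun i => Real.sqrt (A i i) * v i with hu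
  have hdv : (Matrix.diagonal fun i => 1 / Real.sqrt (A i i)) *ᵥ u = v := by
    funext i
    simp only [mulVec_diagonal, hu, one_div]
    rw [inv_mul_eq_div, mul_comm]
    exact mul_div_assoc' (v i) _ _ ▸ mul_div_cancel_right₀ (v i) (hs i).ne'
  have hMu : M *ᵥ u = fun i => (1 / Real.sqrt (A i i)) * (A *ᵥ v) i := by
    funext i
    rw [hMdef, ← mulVec_mulVec, ← mulVec_mulVec, hdv]
    simp [mulVec_diagonal]
  have hpsd : M.PosSemidef := by
    have hct : (Matrix.diagonal fun i => 1 / Real.sqrt (A i i))ᴴ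
        = (Matrix.diagonal fun i => 1 / Real.sqrt (A i i)) := by
      simp [diagonal_conjTranspose]
    have := hA.posSemidef.mul_mul_conjTranspose_same
      (Matrix.diagonal fun i => 1 / Real.sqrt (A i i))
    rwa [hct] at this
  have h1 : (A.mulVec v) ⬝ᵥ ((Matrix.diagonal fun i => (A i i)⁻¹).mulVec (A.mulVec v))
      = (M *ᵥ u) ⬝ᵥ (M *ᵥ u) := by
    rw [hMu]
    simp only [dotProduct, mulVec_diagonal]
    apply Finset.sum_congr rfl
    intro i _
    have h3 : Real.sqrt (A i i) * Real.sqrt (A i i) = A i i :=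
      Real.mul_self_sqrt (hdiag i).le
    have h4 : (A i i)⁻¹ = (1 / Real.sqrt (A i i)) * (1 / Real.sqrt (A i i)) := by
      rw [div_mul_div_comm, one_mul, h3, one_div]
    rw [h4]; ring
  have h2 : v ⬝ᵥ A.mulVec v = u ⬝ᵥ (M *ᵥ u) := by
    rw [hMu]
    simp only [dotProduct, hu]
    apply Finset.sum_congr rfl
    intro i _
    have h5 : Real.sqrt (A i i) * (1 / Real.sqrt (A i i)) = 1 := by
      rw [mul_one_div, div_self (hs i).ne']
    calc v i * (A *ᵥ v) i = (Real.sqrt (A i i) * (1 / Real.sqrt (A i i))) * (v i * (A *ᵥ v) i) := by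
          rw [h5, one_mul]
      _ = Real.sqrt (A i i) * v i * (1 / Real.sqrt (A i i) * (A *ᵥ v) i) := by ring
  rw [h1, h2]
  exact key n hn M hM hpsd u
end

section
/- Let A be SPD, V_H a subspace, B_H an SPD operator on V_H, R̃ an SPD operator, R an operator, and define (Bv, v) = min_{v_H ∈ V_H} ( (B_H v_H, v_H) + (R̃⁻¹(v − (I − RᵀA)v_H), v − (I − RᵀA)v_H) ). Suppose there are constants such that for all v: ‖v‖²_A ≤ 2‖v − (I − RᵀA)v_H‖²_{R̃⁻¹} + 2‖v_H‖²_A holds whenever (Aw,w) ≤ (R̃⁻¹w,w) for all w and (A v_H, v_H) ≤ C (B_H v_H, v_H) on V_H. Then (Av, v) ≤ max(2, 2C)·(Bv, v) for all v. -/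
open Matrix

theorem stmt_16 (n : ℕ) (A BH Rt R : Matrix (Fin n) (Fin n) ℝ)
    (hA : A.PosDef) (hRt : Rt.PosDef)
    (VH : Submodule ℝ (Fin n → ℝ))
    (hBHsym : BHᵀ = BH)
    (hBHpd : ∀ vH ∈ VH, vH ≠ 0 → 0 < vH ⬝ᵥ BH.mulVec vH)
    (C : ℝ)
    (hsm : ∀ w : Fin n → ℝ, w ⬝ᵥ A.mulVec w ≤ w ⬝ᵥ Rt⁻¹.mulVec w)
    (hcoarse : ∀ vH ∈ VH, vH ⬝ᵥ A.mulVec vH ≤ C * (vH ⬝ᵥ BH.mulVec vH))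
    (htri : ∀ v : Fin n → ℝ, ∀ vH ∈ VH,
      v ⬝ᵥ A.mulVec v ≤
        2 * ((v - (1 - Rᵀ * A).mulVec vH) ⬝ᵥ
              Rt⁻¹.mulVec (v - (1 - Rᵀ * A).mulVec vH)) +
        2 * (vH ⬝ᵥ A.mulVec vH)) :
    ∀ v : Fin n → ℝ,
      v ⬝ᵥ A.mulVec v ≤
        max 2 (2 * C) *
          ⨅ vH : VH, ((vH : Fin n → ℝ) ⬝ᵥ BH.mulVec vH +
            (v - (1 - Rᵀ * A).mulVec vH) ⬝ᵥ
              Rt⁻¹.mulVec (v - (1 - Rᵀ * A).mulVec vH)) := by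
  intro v
  set M : ℝ := max 2 (2 * C) with hM
  have hMpos : 0 < M := lt_of_lt_of_le (by norm_num) (le_max_left _ _)
  rw [← div_le_iff₀' hMpos]
  refine le_ciInf fun vH => ?_
  obtain ⟨vH, hvH⟩ := vH
  rw [div_le_iff₀' hMpos]
  set r := v - (1 - Rᵀ * A).mulVec vH with hr
  have hrn : 0 ≤ r ⬝ᵥ Rt⁻¹.mulVec r := by
    have := hRt.inv.posSemidef.dotProduct_mulVec_nonneg r
    simpa using this
  have hBHn : 0 ≤ vH ⬝ᵥ BH.mulVec vH := by
    rcases eq_or_ne vH 0 with h | h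
    · simp [h]
    · exact le_of_lt (hBHpd vH hvH h)
  calc v ⬝ᵥ A.mulVec v
      ≤ 2 * (r ⬝ᵥ Rt⁻¹.mulVec r) + 2 * (vH ⬝ᵥ A.mulVec vH) := htri v vH hvH
    _ ≤ 2 * (r ⬝ᵥ Rt⁻¹.mulVec r) + (2 * C) * (vH ⬝ᵥ BH.mulVec vH) := by
        have := hcoarse vH hvH
        nlinarith
    _ ≤ M * (r ⬝ᵥ Rt⁻¹.mulVec r) + M * (vH ⬝ᵥ BH.mulVec vH) := by
        gcongr
        · exact le_max_left _ _
        · exact le_max_right _ _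
    _ = M * (vH ⬝ᵥ BH.mulVec vH + r ⬝ᵥ Rt⁻¹.mulVec r) := by ring
end

section
/- Let A be SPD, R̃ SPD with (Av, v) ≤ (R̃⁻¹v, v) for all v, and Rᵀ any operator satisfying ‖RᵀAu‖²_{R̃⁻¹} ≤ C₁‖u‖²_A for all u. Let I_H : V_H → V be an operator with ‖I_H v_H‖²_A ≤ C₂‖v_H‖²_a for a norm ‖·‖_a on the fine space, and suppose ‖v − I_H v‖²_{R̃⁻¹} ≤ C₃ ‖v‖²_A. Then for all v: ‖I_H v‖²_A + ‖v − I_H v + RᵀA I_H v‖²_{R̃⁻¹} ≤ (C₂ + 2C₃ + 2C₁C₂)·‖v‖²_A (using (x+y)² ≤ 2x² + 2y², interpreting ‖v‖_a = ‖v‖_A). -/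
open Matrix

lemma quad_sym (n : ℕ) (M : Matrix (Fin n) (Fin n) ℝ) (hM : M.IsHermitian)
    (x y : Fin n → ℝ) : x ⬝ᵥ M.mulVec y = y ⬝ᵥ M.mulVec x := by
  have ht : Mᵀ = M := by
    rw [← Matrix.conjTranspose_eq_transpose_of_trivial]; exact hM.eq
  rw [Matrix.dotProduct_mulVec, ← Matrix.mulVec_transpose, ht, dotProduct_comm]

lemma quad_add_le (n : ℕ) (M : Matrix (Fin n) (Fin n) ℝ) (hM : M.PosSemidef)
    (x y : Fin n → ℝ) :
    (x + y) ⬝ᵥ M.mulVec (x + y) ≤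
      2 * (x ⬝ᵥ M.mulVec x) + 2 * (y ⬝ᵥ M.mulVec y) := by
  have h := hM.dotProduct_mulVec_nonneg (x - y)
  have hsym := quad_sym n M hM.1 x y
  simp only [Matrix.mulVec_add, Matrix.mulVec_sub, dotProduct_add,
    dotProduct_sub, add_dotProduct, sub_dotProduct, star_trivial] at *
  nlinarith [h]

theorem stmt_19 (n : ℕ) (A Rt R IH : Matrix (Fin n) (Fin n) ℝ)
    (hA : A.PosDef) (hRt : Rt.PosDef)
    (C₁ C₂ C₃ : ℝ)
    (hsm : ∀ v : Fin n → ℝ, v ⬝ᵥ A.mulVec v ≤ v ⬝ᵥ Rt⁻¹.mulVec v)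
    (hR : ∀ u : Fin n → ℝ,
      ((Rᵀ * A).mulVec u) ⬝ᵥ Rt⁻¹.mulVec ((Rᵀ * A).mulVec u) ≤
        C₁ * (u ⬝ᵥ A.mulVec u))
    (hIH : ∀ v : Fin n → ℝ,
      (IH.mulVec v) ⬝ᵥ A.mulVec (IH.mulVec v) ≤ C₂ * (v ⬝ᵥ A.mulVec v))
    (happrox : ∀ v : Fin n → ℝ,
      (v - IH.mulVec v) ⬝ᵥ Rt⁻¹.mulVec (v - IH.mulVec v) ≤
        C₃ * (v ⬝ᵥ A.mulVec v)) :
    ∀ v : Fin n → ℝ,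
      (IH.mulVec v) ⬝ᵥ A.mulVec (IH.mulVec v) +
        (v - IH.mulVec v + (Rᵀ * A).mulVec (IH.mulVec v)) ⬝ᵥ
          Rt⁻¹.mulVec (v - IH.mulVec v + (Rᵀ * A).mulVec (IH.mulVec v)) ≤
      (C₂ + 2 * C₃ + 2 * C₁ * C₂) * (v ⬝ᵥ A.mulVec v) := by
  intro v
  rcases Nat.eq_zero_or_pos n with hn | hn
  · subst hn
    simp [dotProduct]
  · -- C₁ ≥ 0
    have hu : (fun _ : Fin n => (1 : ℝ)) ≠ 0 := by
      intro h
      have := congrFun h ⟨0, hn⟩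
      simp at this
    have hqpos : 0 < (fun _ : Fin n => (1:ℝ)) ⬝ᵥ A.mulVec (fun _ => 1) :=
      hA.dotProduct_mulVec_pos hu
    have hMpsd : (Rt⁻¹).PosSemidef := hRt.inv.posSemidef
    have hC₁ : 0 ≤ C₁ := by
      have h1 := hR (fun _ => 1)
      have h2 := hMpsd.dotProduct_mulVec_nonneg ((Rᵀ * A).mulVec (fun _ => 1))
      simp only [star_trivial] at h2
      nlinarith
    have hq0 : 0 ≤ (IH.mulVec v) ⬝ᵥ A.mulVec (IH.mulVec v) :=
      hA.posSemidef.dotProduct_mulVec_nonneg (IH.mulVec v)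
    have hp0 : 0 ≤ v ⬝ᵥ A.mulVec v := hA.posSemidef.dotProduct_mulVec_nonneg v
    have hsum := quad_add_le n Rt⁻¹ hMpsd (v - IH.mulVec v)
      ((Rᵀ * A).mulVec (IH.mulVec v))
    have h1 := happrox v
    have h2 := hR (IH.mulVec v)
    have h3 := hIH v
    nlinarith
end
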